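/- arXiv:1204.1624 — 4 statements merged into one kernel-verified Lean document; each statement's English description precedes it below -/
import Mathlib

section
/- (Upper bound on the probability of type-1 anomalies for MUCB.) Let K ≥ 2 and run MUCB(α) on K arms with exponentially distributed rewards. For each suboptimal arm k ≠ k* set u_k(t) = ⌈ 4α ln(t) / (1 − ρ_k)² ⌉. Then for every suboptimal arm k and every t ≥ 2, the probability of the type-1 anomaly satisfies P( {φ₁(u_k(t))}_{k,t} ) ≤ t^{−α/2 + 1}. -/
open MeasureTheory ProbabilityTheory Real Set
open scoped ENNReal NNReal

/-- Calculus fact: `log x ≤ (x - x⁻¹)/2` for `x ≥ 1`. -/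
lemma my_log_le_half_sub_inv {x : ℝ} (hx : 1 ≤ x) :
    Real.log x ≤ (x - x⁻¹) / 2 := by
  set F : ℝ → ℝ := fun z => (z - z⁻¹) / 2 - Real.log z with hF
  have hderiv : ∀ z : ℝ, 0 < z →
      HasDerivAt F ((1 - -(z ^ 2)⁻¹) / 2 - z⁻¹) z := by
    intro z hz
    exact (((hasDerivAt_id z).sub (hasDerivAt_inv hz.ne')).div_const 2).sub
      (Real.hasDerivAt_log hz.ne')
  have hmono : MonotoneOn F (Ici (1 : ℝ)) := by
    refine monotoneOn_of_deriv_nonneg (convex_Ici 1) ?_ ?_ ?_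
    · intro z hz
      exact ((hderiv z (lt_of_lt_of_le one_pos hz)).continuousAt).continuousWithinAt
    · intro z hz
      rw [interior_Ici] at hz
      exact ((hderiv z (lt_trans one_pos hz)).differentiableAt).differentiableWithinAt
    · intro z hz
      rw [interior_Ici] at hz
      have hz0 : (0:ℝ) < z := lt_trans one_pos hz
      rw [(hderiv z hz0).deriv]
      have h2 : (0:ℝ) < z ^ 2 := by positivity
      rw [sub_nonneg, inv_le_iff_one_le_mul₀ hz0]
      have h3 : (z^2)⁻¹ * z^2 = 1 := inv_mul_cancel₀ h2.ne'
      nlinarith [sq_nonneg (z - 1)]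
  have h1 : F 1 ≤ F x := hmono (by simp) (by simpa using hx) hx
  have : F 1 = 0 := by simp [hF]
  rw [this] at h1
  simpa [hF, sub_nonneg] using h1

lemma my_expMeasure_eq (lam : ℝ) :
    expMeasure lam = (volume : Measure ℝ).withDensity (exponentialPDF lam) := rfl

lemma my_pdf_mul_eq (lam θ : ℝ) :
    (fun x : ℝ => Real.exp (θ * x) * exponentialPDFReal lam x) =
      Set.indicator (Ici (0:ℝ)) (fun x => lam * Real.exp (-((lam - θ) * x))) := by
  funext x
  rw [Set.indicator_apply]
  by_cases hx : (0:ℝ) ≤ x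
  · rw [if_pos (by simpa using hx)]
    simp only [exponentialPDFReal, gammaPDFReal, if_pos hx, rpow_one, Real.Gamma_one, div_one,
      sub_self, rpow_zero, mul_one]
    have h : -((lam - θ) * x) = θ * x + -(lam * x) := by ring
    rw [h, Real.exp_add]
    ring
  · rw [if_neg (by simpa using hx)]
    simp only [exponentialPDFReal, gammaPDFReal, if_neg hx, mul_zero]

lemma my_indicator_integrable {lam θ : ℝ} (hlam : 0 < lam) (hθ : θ < lam) :
    Integrable (Set.indicator (Ici (0:ℝ)) (fun x => lam * Real.exp (-((lam - θ) * x)))) := by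
  have h : IntegrableOn (fun x => lam * Real.exp (-((lam - θ) * x))) (Ici (0:ℝ)) := by
    rw [integrableOn_Ici_iff_integrableOn_Ioi]
    have h := (exp_neg_integrableOn_Ioi (0:ℝ) (sub_pos.mpr hθ)).const_mul lam
    have h2 : (fun x : ℝ => lam * Real.exp (-((lam - θ) * x))) =
        fun x : ℝ => lam * Real.exp (-(lam - θ) * x) := by
      funext x; ring_nf
    rw [h2]
    exact h
  exact h.integrable_indicator measurableSet_Ici

lemma my_exp_integral_expMeasure {lam θ : ℝ} (hlam : 0 < lam) (hθ : θ < lam) :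
    Integrable (fun x : ℝ => Real.exp (θ * x)) (expMeasure lam) ∧
      ∫ x : ℝ, Real.exp (θ * x) ∂(expMeasure lam) = lam / (lam - θ) := by
  have hclam : (0:ℝ) < lam - θ := sub_pos.mpr hθ
  have hpdfmeas : Measurable (exponentialPDF lam) :=
    (measurable_exponentialPDFReal lam).ennreal_ofReal
  have hpdf_nonneg : ∀ x, 0 ≤ exponentialPDFReal lam x := exponentialPDFReal_nonneg hlam
  constructor
  · rw [my_expMeasure_eq, integrable_withDensity_iff hpdfmeas
      (Filter.Eventually.of_forall fun x => ENNReal.ofReal_lt_top)]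
    have : (fun x : ℝ => Real.exp (θ * x) * (exponentialPDF lam x).toReal) =
        (fun x : ℝ => Real.exp (θ * x) * exponentialPDFReal lam x) := by
      funext x
      rw [exponentialPDF, ENNReal.toReal_ofReal (hpdf_nonneg x)]
    rw [this, my_pdf_mul_eq]
    exact my_indicator_integrable hlam hθ
  · have hwd : (volume : Measure ℝ).withDensity (exponentialPDF lam) =
        (volume : Measure ℝ).withDensity
          (fun x => ((exponentialPDFReal lam x).toNNReal : ℝ≥0∞)) := rfl
    rw [my_expMeasure_eq, hwd, integral_withDensity_eq_integral_smul
      ((measurable_exponentialPDFReal lam).real_toNNReal) (fun x => Real.exp (θ * x))]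
    have : (fun x : ℝ => (exponentialPDFReal lam x).toNNReal • Real.exp (θ * x)) =
        (fun x : ℝ => Real.exp (θ * x) * exponentialPDFReal lam x) := by
      funext x
      rw [NNReal.smul_def, smul_eq_mul, Real.coe_toNNReal _ (hpdf_nonneg x), mul_comm]
    rw [this, my_pdf_mul_eq, integral_indicator measurableSet_Ici,
      integral_Ici_eq_integral_Ioi, MeasureTheory.integral_const_mul]
    have hint : ∫ x in Ioi (0:ℝ), Real.exp (-((lam - θ) * x)) = 1 / (lam - θ) := by
      have h := integral_rpow_mul_exp_neg_mul_Ioi one_pos hclam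
      simp only [sub_self, rpow_zero, one_mul, rpow_one, Real.Gamma_one, mul_one] at h
      exact h
    rw [hint]
    field_simp

lemma my_exp_integrable_and_integral {Ω : Type*} [MeasurableSpace Ω] (P : Measure Ω)
    {lam θ : ℝ} (hlam : 0 < lam) (hθ : θ < lam) {Y : Ω → ℝ} (hY : Measurable Y)
    (hd : Measure.map Y P = expMeasure lam) :
    Integrable (fun ω => Real.exp (θ * Y ω)) P ∧
      ∫ ω, Real.exp (θ * Y ω) ∂P = lam / (lam - θ) := by
  have hg : Measurable (fun x : ℝ => Real.exp (θ * x)) :=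
    Real.measurable_exp.comp (measurable_id.const_mul θ)
  have h1 := (my_exp_integral_expMeasure hlam hθ).1
  have h2 := (my_exp_integral_expMeasure hlam hθ).2
  rw [← hd] at h1 h2
  constructor
  · exact (integrable_map_measure hg.aestronglyMeasurable hY.aemeasurable).mp h1
  · rw [← h2, integral_map hY.aemeasurable hg.aestronglyMeasurable]

lemma my_iIndepFun_slice {Ω : Type*} [MeasurableSpace Ω] {P : Measure Ω} {K : ℕ}
    {X : Fin K → ℕ → Ω → ℝ}
    (h : iIndepFun (fun p : Fin K × ℕ => X p.1 p.2) P) (k : Fin K) :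
    iIndepFun (fun n : ℕ => X k n) P := by
  rw [iIndepFun_iff_measure_inter_preimage_eq_mul] at h ⊢
  intro S sets hsets
  classical
  let e : ℕ ↪ Fin K × ℕ := ⟨fun n => (k, n), fun a b hab => by simpa using hab⟩
  have key := h (S.map e) (sets := fun p => sets p.2) ?_
  · have h1 : (⋂ p ∈ S.map e, (fun ω => X p.1 p.2 ω) ⁻¹' sets p.2) =
        ⋂ n ∈ S, X k n ⁻¹' sets n := by
      ext ω
      simp only [Set.mem_iInter, Finset.mem_map, Function.Embedding.coeFn_mk]
      constructor
      · intro hω n hn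
        exact hω (k, n) ⟨n, hn, rfl⟩
      · rintro hω p ⟨n, hn, rfl⟩
        exact hω n hn
    have h2 : (∏ p ∈ S.map e, P ((fun ω => X p.1 p.2 ω) ⁻¹' sets p.2)) =
        ∏ n ∈ S, P (X k n ⁻¹' sets n) := Finset.prod_map S e _
    rw [h1, h2] at key
    exact key
  · intro p hp
    rcases Finset.mem_map.mp hp with ⟨n, hn, rfl⟩
    exact hsets n hn

lemma my_chernoff_exp {Ω : Type*} [MeasurableSpace Ω] (P : Measure Ω) [IsProbabilityMeasure P]
    {K : ℕ} {lam : Fin K → ℝ} (hlam : ∀ k, 0 < lam k) {X : Fin K → ℕ → Ω → ℝ}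
    (hXmeas : ∀ k n, Measurable (X k n))
    (hindep : iIndepFun (fun p : Fin K × ℕ => X p.1 p.2) P)
    (hdist : ∀ k n, Measure.map (X k n) P = expMeasure (lam k))
    (k : Fin K) (s : ℕ) {b : ℝ} (hb : (lam k)⁻¹ ≤ b) :
    (P {ω | (s : ℝ) * b ≤ ∑ n ∈ Finset.range s, X k n ω}).toReal ≤
      Real.exp (-(s : ℝ) * (lam k * b - 1 - Real.log (lam k * b))) := by
  have hbpos : 0 < b := lt_of_lt_of_le (inv_pos.mpr (hlam k)) hb
  set θ : ℝ := lam k - 1 / b with hθdef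
  have hθlt : θ < lam k := by
    have : 0 < 1 / b := by positivity
    simp only [hθdef]; linarith
  have hθ0 : 0 ≤ θ := by
    have h1 : 1 / b ≤ lam k := by
      rw [div_le_iff₀ hbpos]
      calc (1:ℝ) = lam k * (lam k)⁻¹ := (mul_inv_cancel₀ (hlam k).ne').symm
        _ ≤ lam k * b := by gcongr; exact (hlam k).le
    simp only [hθdef]; linarith
  set S : Ω → ℝ := ∑ n ∈ Finset.range s, X k n with hSdef
  have hSapp : ∀ ω, S ω = ∑ n ∈ Finset.range s, X k n ω := by
    intro ω; simp [hSdef]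
  have hset : {ω | (s : ℝ) * b ≤ ∑ n ∈ Finset.range s, X k n ω} =
      {ω | (s : ℝ) * b ≤ S ω} := by
    ext ω; simp [hSapp]
  have hslice := my_iIndepFun_slice hindep k
  have hint : ∀ n ∈ Finset.range s, Integrable (fun ω => Real.exp (θ * X k n ω)) P :=
    fun n _ => (my_exp_integrable_and_integral P (hlam k) hθlt (hXmeas k n) (hdist k n)).1
  have hintS : Integrable (fun ω => Real.exp (θ * S ω)) P :=
    hslice.integrable_exp_mul_sum (fun n => hXmeas k n) hint
  have hcher := measure_ge_le_exp_mul_mgf (μ := P) (X := S) ((s : ℝ) * b) hθ0 hintS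
  have hmgf : mgf S P θ = (lam k * b) ^ s := by
    rw [hSdef, hslice.mgf_sum (fun n => hXmeas k n)]
    have hone : ∀ n ∈ Finset.range s, mgf (X k n) P θ = lam k * b := by
      intro n _
      have h2 := (my_exp_integrable_and_integral P (hlam k) hθlt (hXmeas k n) (hdist k n)).2
      rw [mgf, h2]
      have hlamθ : lam k - θ = 1 / b := by simp [hθdef]
      rw [hlamθ]
      field_simp
    rw [Finset.prod_congr rfl hone, Finset.prod_const, Finset.card_range]
  rw [hset]
  refine hcher.trans ?_
  rw [hmgf]
  have hx0 : 0 < lam k * b := mul_pos (hlam k) hbpos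
  have hpow : (lam k * b) ^ s = Real.exp ((s : ℝ) * Real.log (lam k * b)) := by
    rw [← Real.exp_log hx0, ← Real.exp_nat_mul, Real.exp_log hx0]
  rw [hpow, ← Real.exp_add]
  apply le_of_eq
  congr 1
  have hθb : θ * b = lam k * b - 1 := by
    rw [hθdef, sub_mul, one_div, inv_mul_cancel₀ hbpos.ne']
  linear_combination (-(s : ℝ)) * hθb

lemma my_exponent_bound {ρ δ x : ℝ} (hρ0 : 0 < ρ) (hρ1 : ρ < 1) (hδ0 : 0 ≤ δ)
    (hδ : δ ≤ (1 - ρ) / 2) (hx : ρ * x = 1 - δ) :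
    δ ^ 2 / 2 ≤ x - 1 - Real.log x := by
  have hx1 : 1 ≤ x := by nlinarith
  have hx0 : (0:ℝ) < x := lt_of_lt_of_le one_pos hx1
  have hlog := my_log_le_half_sub_inv hx1
  have hkey : δ ^ 2 * x ≤ (x - 1) ^ 2 := by
    have h1 : δ ≤ 1 - δ - ρ := by linarith
    have h3 : (1 - δ) * ρ ≤ 1 := by nlinarith
    have h4 : 0 ≤ (1 - δ - ρ) ^ 2 - δ ^ 2 * ((1 - δ) * ρ) := by nlinarith
    have h5 : ρ * (x - 1) = 1 - δ - ρ := by linear_combination hx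
    have h6 : δ ^ 2 * x * ρ ^ 2 = δ ^ 2 * ((1 - δ) * ρ) := by
      linear_combination (δ ^ 2 * ρ) * hx
    have h7 : (x - 1) ^ 2 * ρ ^ 2 = (1 - δ - ρ) ^ 2 := by
      linear_combination (ρ * (x - 1) + (1 - δ - ρ)) * h5
    nlinarith [mul_pos hρ0 hρ0]
  have hhalf : x - 1 - (x - x⁻¹) / 2 = (x - 1) ^ 2 / (2 * x) := by
    field_simp
    ring
  have : δ ^ 2 / 2 ≤ (x - 1) ^ 2 / (2 * x) := by
    rw [div_le_div_iff₀ (by norm_num) (by positivity)]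
    nlinarith
  linarith [hhalf ▸ this]

/-- `pullCount I k t ω` is `T_{k,t}`, the number of rounds `m < t` at which arm `k` was pulled. -/
def pullCount {Ω : Type*} {K : ℕ} (I : ℕ → Ω → Fin K) (k : Fin K) (t : ℕ) (ω : Ω) : ℕ :=
  ((Finset.range t).filter fun m => I m ω = k).card

/-- `reward X I m ω` is the reward `r_m` received at round `m`: the next unseen sample of the
pulled arm `I_m` (here `X k n` is the reward of the `(n+1)`-st pull of arm `k`, `n = 0, 1, …`). -/
def reward {Ω : Type*} {K : ℕ} (X : Fin K → ℕ → Ω → ℝ) (I : ℕ → Ω → Fin K)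
    (m : ℕ) (ω : Ω) : ℝ :=
  X (I m ω) (pullCount I (I m ω) m ω) ω

/-- `sampleMean X I k t ω` is `X̄_{k,t}`, the empirical mean of the rewards obtained from arm `k`
during the first `t` rounds (junk value `0` if the arm was never pulled). -/
noncomputable def sampleMean {Ω : Type*} {K : ℕ} (X : Fin K → ℕ → Ω → ℝ) (I : ℕ → Ω → Fin K)
    (k : Fin K) (t : ℕ) (ω : Ω) : ℝ :=
  (∑ n ∈ Finset.range (pullCount I k t ω), X k n ω) / (pullCount I k t ω)

/-- The MUCB(α) index `B_{k,t} = X̄_{k,t} · M_{k,t}(T_{k,t})` with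
`M_{k,t}(u) = 1 / max {0, 1 − √(α ln t / u)}` and the convention `1/0 = +∞`: the index is `⊤`
exactly when `T_{k,t} ≤ α ln t` (in particular when `T_{k,t} = 0`), and otherwise equals the
real number `X̄_{k,t} · (1 − √(α ln t / T_{k,t}))⁻¹`. -/
noncomputable def mucbIndex {Ω : Type*} {K : ℕ} (α : ℝ) (X : Fin K → ℕ → Ω → ℝ)
    (I : ℕ → Ω → Fin K) (k : Fin K) (t : ℕ) (ω : Ω) : EReal :=
  if pullCount I k t ω = 0 ∨ (pullCount I k t ω : ℝ) ≤ α * Real.log t then ⊤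
  else ((sampleMean X I k t ω *
      (1 - Real.sqrt (α * Real.log t / (pullCount I k t ω)))⁻¹ : ℝ) : EReal)

/-- A policy `I` is deterministic if the arm chosen at each round `t` is a function of the
history `(I_0, r_0, …, I_{t−1}, r_{t−1})` of past arms and rewards. -/
def IsDeterministicPolicy {Ω : Type*} {K : ℕ} (X : Fin K → ℕ → Ω → ℝ)
    (I : ℕ → Ω → Fin K) : Prop :=
  ∃ pol : (t : ℕ) → (Fin t → Fin K × ℝ) → Fin K,
    ∀ t ω, I t ω = pol t fun m => (I m.1 ω, reward X I m.1 ω)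

/-- The policy `I` is a MUCB(α) policy: at every round it selects an arm of maximal index. -/
def IsMUCBPolicy {Ω : Type*} {K : ℕ} (α : ℝ) (X : Fin K → ℕ → Ω → ℝ)
    (I : ℕ → Ω → Fin K) : Prop :=
  ∀ t ω k, mucbIndex α X I k t ω ≤ mucbIndex α X I (I t ω) t ω

set_option maxHeartbeats 1000000 in
/-- **Upper bound on the probability of type-1 anomalies for MUCB (Lemma 2).**
Run MUCB(α) on `K ≥ 2` arms with i.i.d. exponential rewards (means `μ_k = 1/λ_k`, unique
optimal arm `k*`, `μ* = 1/λ_{k*}`, `ρ_k = μ_k/μ*`).  For a suboptimal arm `k ≠ k*` set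
`u_k(t) = ⌈4 α ln t / (1 − ρ_k)²⌉`.  Then for every `t ≥ 2`, the type-1 anomaly
`{φ₁(u_k(t))}_{k,t} = {T_{k,t} ≥ u_k(t) and B_{k,t} ≥ μ*}` satisfies
`P({φ₁(u_k(t))}_{k,t}) ≤ t^{−α/2+1}`. -/
theorem mucb_type_one_anomaly_bound {Ω : Type*} [MeasurableSpace Ω] (P : Measure Ω)
    [IsProbabilityMeasure P] (K : ℕ) (hK : 2 ≤ K)
    (lam : Fin K → ℝ) (hlam : ∀ k, 0 < lam k)
    (X : Fin K → ℕ → Ω → ℝ) (hXmeas : ∀ k n, Measurable (X k n))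
    (hindep : iIndepFun (fun p : Fin K × ℕ => X p.1 p.2) P)
    (hdist : ∀ k n, Measure.map (X k n) P = expMeasure (lam k))
    (I : ℕ → Ω → Fin K) (hImeas : ∀ t, Measurable (I t))
    (hdet : IsDeterministicPolicy X I)
    (kstar : Fin K) (hkstar : ∀ k, k ≠ kstar → (lam k)⁻¹ < (lam kstar)⁻¹)
    (α : ℝ) (hα : 0 ≤ α) (hmucb : IsMUCBPolicy α X I)
    (k : Fin K) (hk : k ≠ kstar) (t : ℕ) (ht : 2 ≤ t) :
    P {ω | ⌈4 * α * Real.log t / (1 - (lam k)⁻¹ / (lam kstar)⁻¹) ^ 2⌉₊ ≤ pullCount I k t ω ∧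
        (((lam kstar)⁻¹ : ℝ) : EReal) ≤ mucbIndex α X I k t ω} ≤
      ENNReal.ofReal ((t : ℝ) ^ (-(α / 2) + 1)) := by
  have ht1 : (1:ℝ) < t := by exact_mod_cast lt_of_lt_of_le one_lt_two ht
  have htpos : (0:ℝ) < t := lt_trans one_pos ht1
  by_cases hα2 : α ≤ 2
  · -- trivial case: the bound is at least 1
    refine le_trans prob_le_one ?_
    rw [← ENNReal.ofReal_one]
    apply ENNReal.ofReal_le_ofReal
    have he : (0:ℝ) ≤ -(α / 2) + 1 := by linarith
    calc (1:ℝ) = (1:ℝ) ^ (-(α / 2) + 1) := (Real.one_rpow _).symm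
      _ ≤ (t:ℝ) ^ (-(α / 2) + 1) := Real.rpow_le_rpow zero_le_one ht1.le he
  · push_neg at hα2
    have hαpos : (0:ℝ) < α := by linarith
    have hlogt : 0 < Real.log t := Real.log_pos ht1
    have hL : 0 < α * Real.log t := mul_pos hαpos hlogt
    set ρ : ℝ := (lam k)⁻¹ / (lam kstar)⁻¹ with hρdef
    have hμs : (0:ℝ) < (lam kstar)⁻¹ := inv_pos.mpr (hlam kstar)
    have hμk : (0:ℝ) < (lam k)⁻¹ := inv_pos.mpr (hlam k)
    have hρ0 : 0 < ρ := div_pos hμk hμs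
    have hρ1 : ρ < 1 := (div_lt_one hμs).mpr (hkstar k hk)
    have hsq1 : (1 - ρ) ^ 2 < 1 := by nlinarith
    have hsqpos : 0 < (1 - ρ) ^ 2 := pow_pos (by linarith) 2
    set u : ℕ := ⌈4 * α * Real.log t / (1 - ρ) ^ 2⌉₊ with hudef
    have hu1 : 1 ≤ u := by
      rw [hudef]
      exact Nat.one_le_iff_ne_zero.mpr (Nat.ceil_pos.mpr (div_pos (by nlinarith) hsqpos)).ne'
    -- facts valid for any s with u ≤ s
    have hfacts : ∀ s : ℕ, u ≤ s →
        0 < s ∧ α * Real.log t < (s:ℝ) ∧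
        Real.sqrt (α * Real.log t / s) ≤ (1 - ρ) / 2 := by
      intro s hus
      have hs0 : 0 < s := lt_of_lt_of_le hu1 hus
      have hspos : (0:ℝ) < s := by exact_mod_cast hs0
      have hsceil : (4 * α * Real.log t / (1 - ρ) ^ 2 : ℝ) ≤ s := by
        refine le_trans (Nat.le_ceil _) ?_
        exact_mod_cast hus
      have h4L : 4 * α * Real.log t ≤ (1 - ρ) ^ 2 * s := by
        rw [div_le_iff₀ hsqpos] at hsceil
        linarith
      have hsL : α * Real.log t < (s:ℝ) := by nlinarith
      refine ⟨hs0, hsL, ?_⟩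
      have h1 : α * Real.log t / s ≤ ((1 - ρ) / 2) ^ 2 := by
        rw [div_le_iff₀ hspos]
        nlinarith
      calc Real.sqrt (α * Real.log t / s) ≤ Real.sqrt (((1 - ρ) / 2) ^ 2) :=
            Real.sqrt_le_sqrt h1
        _ = (1 - ρ) / 2 := Real.sqrt_sq (by linarith)
    -- the union of per-count events
    have hsubset : {ω | u ≤ pullCount I k t ω ∧
        (((lam kstar)⁻¹ : ℝ) : EReal) ≤ mucbIndex α X I k t ω} ⊆
        ⋃ s ∈ Finset.Icc u t, {ω | (s:ℝ) *
          ((lam kstar)⁻¹ * (1 - Real.sqrt (α * Real.log t / s))) ≤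
          ∑ n ∈ Finset.range s, X k n ω} := by
      intro ω hω
      obtain ⟨hcount, hindex⟩ := hω
      set s : ℕ := pullCount I k t ω with hs
      obtain ⟨hs0, hsL, hδle⟩ := hfacts s hcount
      have hspos : (0:ℝ) < s := by exact_mod_cast hs0
      have hst : s ≤ t := by
        rw [hs, pullCount]
        exact le_trans (Finset.card_filter_le _ _) (le_of_eq (Finset.card_range t))
      set δ : ℝ := Real.sqrt (α * Real.log t / s) with hδdef
      have h1δ : 0 < 1 - δ := by linarith
      simp only [mucbIndex, ← hs] at hindex
      rw [if_neg (by push_neg; exact ⟨hs0.ne', hsL⟩)] at hindex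
      rw [EReal.coe_le_coe_iff] at hindex
      have hmean : sampleMean X I k t ω = (∑ n ∈ Finset.range s, X k n ω) / s := rfl
      rw [hmean] at hindex
      have h2 : (lam kstar)⁻¹ * (1 - δ) ≤ (∑ n ∈ Finset.range s, X k n ω) / s := by
        rw [← le_div_iff₀ h1δ, div_eq_mul_inv]
        exact hindex
      have h3 : ((lam kstar)⁻¹ * (1 - δ)) * s ≤ ∑ n ∈ Finset.range s, X k n ω :=
        (le_div_iff₀ hspos).mp h2
      refine Set.mem_biUnion (Finset.mem_Icc.mpr ⟨hcount, hst⟩) ?_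
      simp only [Set.mem_setOf_eq]
      linarith
    refine le_trans (measure_mono hsubset) ?_
    refine le_trans (measure_biUnion_finset_le _ _) ?_
    have hterm : ∀ s ∈ Finset.Icc u t,
        P {ω | (s:ℝ) * ((lam kstar)⁻¹ * (1 - Real.sqrt (α * Real.log t / s))) ≤
            ∑ n ∈ Finset.range s, X k n ω} ≤
          ENNReal.ofReal ((t:ℝ) ^ (-(α / 2))) := by
      intro s hsmem
      obtain ⟨hus, hst⟩ := Finset.mem_Icc.mp hsmem
      obtain ⟨hs0, hsL, hδle⟩ := hfacts s hus
      have hspos : (0:ℝ) < s := by exact_mod_cast hs0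
      set δ : ℝ := Real.sqrt (α * Real.log t / s) with hδdef
      have hδ0 : 0 ≤ δ := Real.sqrt_nonneg _
      have hδsq : δ ^ 2 = α * Real.log t / s :=
        Real.sq_sqrt (by positivity)
      set b : ℝ := (lam kstar)⁻¹ * (1 - δ) with hbdef
      have hb : (lam k)⁻¹ ≤ b := by
        have hρμ : ρ * (lam kstar)⁻¹ = (lam k)⁻¹ := by
          rw [hρdef, div_mul_cancel₀ _ hμs.ne']
      -- (lam k)⁻¹ = ρ μ* ≤ μ*(1-δ) since 1-δ ≥ (1+ρ)/2 ≥ ρ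
        nlinarith
      have hcher := my_chernoff_exp P hlam hXmeas hindep hdist k s hb
      have hx : ρ * (lam k * b) = 1 - δ := by
        rw [hρdef, hbdef]
        field_simp [(hlam k).ne', (hlam kstar).ne']
      have hexp := my_exponent_bound hρ0 hρ1 hδ0 hδle hx
      have hsδ : (s:ℝ) * (δ ^ 2) = α * Real.log t := by
        rw [hδsq, mul_div_cancel₀ _ hspos.ne']
      have hexp2 : -(s:ℝ) * (lam k * b - 1 - Real.log (lam k * b)) ≤
          Real.log t * (-(α / 2)) := by
        have h4 : (s:ℝ) * (δ ^ 2 / 2) ≤ (s:ℝ) * (lam k * b - 1 - Real.log (lam k * b)) := by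
          apply mul_le_mul_of_nonneg_left hexp hspos.le
        have h5 : (s:ℝ) * (δ ^ 2 / 2) = α * Real.log t / 2 := by
          linear_combination hsδ / 2
        linarith
      have hrw : (t:ℝ) ^ (-(α / 2)) = Real.exp (Real.log t * (-(α / 2))) :=
        Real.rpow_def_of_pos htpos _
      calc P {ω | (s:ℝ) * b ≤ ∑ n ∈ Finset.range s, X k n ω}
          = ENNReal.ofReal ((P {ω | (s:ℝ) * b ≤ ∑ n ∈ Finset.range s, X k n ω}).toReal) :=
            (ENNReal.ofReal_toReal (measure_ne_top P _)).symm
        _ ≤ ENNReal.ofReal ((t:ℝ) ^ (-(α / 2))) := by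
            apply ENNReal.ofReal_le_ofReal
            refine le_trans hcher ?_
            rw [hrw]
            exact Real.exp_le_exp.mpr hexp2
    refine le_trans (Finset.sum_le_sum hterm) ?_
    rw [Finset.sum_const, Nat.card_Icc]
    have hcard : t + 1 - u ≤ t := by omega
    calc (t + 1 - u) • ENNReal.ofReal ((t:ℝ) ^ (-(α / 2)))
        = ((t + 1 - u : ℕ) : ℝ≥0∞) * ENNReal.ofReal ((t:ℝ) ^ (-(α / 2))) := by
          rw [nsmul_eq_mul]
      _ ≤ ((t : ℕ) : ℝ≥0∞) * ENNReal.ofReal ((t:ℝ) ^ (-(α / 2))) := by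
          exact mul_le_mul_left (by exact_mod_cast hcard) _
      _ = ENNReal.ofReal ((t:ℝ) * (t:ℝ) ^ (-(α / 2))) := by
          rw [ENNReal.ofReal_mul htpos.le, ENNReal.ofReal_natCast]
      _ = ENNReal.ofReal ((t:ℝ) ^ (-(α / 2) + 1)) := by
          congr 1
          rw [Real.rpow_add htpos, Real.rpow_one]
          ring
end

section
/- (Upper bound on the probability of type-2 anomalies for MUCB.) Let K ≥ 2 and run MUCB(α) on K arms with exponentially distributed rewards. Then for every t ≥ 2, the probability of the type-2 anomaly satisfies P( {φ₂}_t ) ≤ t^{−α/2 + 1}. -/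
open MeasureTheory ProbabilityTheory

section MucbAux
open MeasureTheory ProbabilityTheory Real Set intervalIntegral


lemma my_log_one_sub_le {e : ℝ} (h0 : 0 ≤ e) (h1 : e < 1) :
    Real.log (1 - e) ≤ -e - e^2/2 := by
  have hpos : 0 < 1 - e := by linarith
  have hle : (1 - e : ℝ) ≤ 1 := by linarith
  have h1' : -Real.log (1 - e) = ∫ x in (1-e)..1, x⁻¹ := by
    rw [integral_inv_of_pos hpos one_pos, one_div, Real.log_inv]
  have h2 : (∫ x in (1-e)..1, (2 - x)) ≤ ∫ x in (1-e)..1, x⁻¹ := by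
    apply intervalIntegral.integral_mono_on hle
    · exact (_root_.intervalIntegrable_const).sub intervalIntegral.intervalIntegrable_id
    · refine intervalIntegrable_inv (fun x hx => ?_) continuousOn_id
      rw [uIcc_of_le hle] at hx
      exact ne_of_gt (lt_of_lt_of_le hpos hx.1)
    · intro x hx
      have hx1 : 1 - e ≤ x := hx.1
      have hx2 : x ≤ 1 := hx.2
      have hxpos : 0 < x := lt_of_lt_of_le hpos hx1
      rw [show x⁻¹ = 1/x by ring, le_div_iff₀ hxpos]
      nlinarith
  have h3 : (∫ x in (1-e)..1, (2 - x)) = e + e^2/2 := by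
    rw [intervalIntegral.integral_sub _root_.intervalIntegrable_const
      intervalIntegral.intervalIntegrable_id, intervalIntegral.integral_const,
      integral_id]
    simp only [smul_eq_mul]
    ring
  linarith [h1' ▸ h3 ▸ h2]

lemma my_integral_exp_neg_mul_Ioi {b : ℝ} (hb : 0 < b) :
    ∫ x in Ioi (0:ℝ), Real.exp (-(b*x)) = b⁻¹ := by
  have := MeasureTheory.integral_comp_mul_left_Ioi (fun y => Real.exp (-y)) 0 hb
  simp only [mul_zero] at this
  calc ∫ x in Ioi (0:ℝ), Real.exp (-(b*x)) = b⁻¹ • ∫ x in Ioi (0:ℝ), Real.exp (-x) := this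
    _ = b⁻¹ := by rw [integral_exp_neg_Ioi_zero]; simp



lemma my_lintegral_exp_expMeasure {lam s : ℝ} (hlam : 0 < lam) (hs : s < lam) :
    ∫⁻ x, ENNReal.ofReal (Real.exp (s * x)) ∂(expMeasure lam)
      = ENNReal.ofReal (lam / (lam - s)) := by
  have hb : 0 < lam - s := by linarith
  have hmeas : Measurable (exponentialPDF lam) :=
    (measurable_exponentialPDFReal lam).ennreal_ofReal
  rw [expMeasure, gammaMeasure, show gammaPDF 1 lam = exponentialPDF lam from rfl,
    lintegral_withDensity_eq_lintegral_mul _ hmeas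
    (show Measurable fun x : ℝ => ENNReal.ofReal (rexp (s * x)) from
      (measurable_const.mul measurable_id').exp.ennreal_ofReal)]
  have heq : ∀ x : ℝ, (exponentialPDF lam * fun x => ENNReal.ofReal (rexp (s * x))) x
      = Set.indicator (Ioi (0:ℝ)) (fun x => ENNReal.ofReal (lam * rexp (-((lam - s) * x)))) x
        + Set.indicator {(0:ℝ)} (fun _ => ENNReal.ofReal lam) x := by
    intro x
    simp only [Pi.mul_apply, indicator]
    rw [exponentialPDF_eq]
    rcases lt_trichotomy x 0 with h | h | h
    · rw [if_neg (by linarith), if_neg (by simp [not_lt.mpr h.le, mem_Ioi]),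
        if_neg (by simp [h.ne])]
      simp
    · subst h
      simp [← ENNReal.ofReal_mul hlam.le, ← Real.exp_add]
    · rw [if_pos h.le, if_pos (mem_Ioi.mpr h),
        if_neg (fun hx => h.ne' (mem_singleton_iff.mp hx)), add_zero,
        ← ENNReal.ofReal_mul (by positivity)]
      congr 1
      rw [mul_assoc, ← Real.exp_add]
      ring_nf
  rw [lintegral_congr heq, lintegral_add_right _
      ((measurable_const (a := ENNReal.ofReal lam)).indicator (measurableSet_singleton 0)),
    lintegral_indicator (measurableSet_singleton 0), lintegral_indicator measurableSet_Ioi]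
  have h0 : ∫⁻ _x in ({0} : Set ℝ), ENNReal.ofReal lam = 0 := by
    rw [setLIntegral_const]
    simp
  rw [h0, add_zero]
  have hint : IntegrableOn (fun x => lam * rexp (-((lam - s) * x))) (Ioi 0) := by
    have h := (exp_neg_integrableOn_Ioi 0 hb).const_mul lam
    simp only [neg_mul] at h
    exact h
  rw [← ofReal_integral_eq_lintegral_ofReal hint (ae_of_all _ fun x => by positivity)]
  congr 1
  rw [MeasureTheory.integral_const_mul, my_integral_exp_neg_mul_Ioi hb, div_eq_mul_inv]


lemma my_exp_int_mgf {Ω : Type*} [MeasurableSpace Ω] {P : Measure Ω} {lam s : ℝ}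
    (hlam : 0 < lam) (hs : s < lam) {X : Ω → ℝ} (hX : Measurable X)
    (hd : Measure.map X P = expMeasure lam) :
    Integrable (fun ω => rexp (s * X ω)) P ∧ mgf X P s = lam / (lam - s) := by
  have hg : Measurable fun x : ℝ => rexp (s * x) := (measurable_const.mul measurable_id').exp
  have hL : ∫⁻ ω, ENNReal.ofReal (rexp (s * X ω)) ∂P = ENNReal.ofReal (lam / (lam - s)) := by
    rw [← lintegral_map hg.ennreal_ofReal hX, hd, my_lintegral_exp_expMeasure hlam hs]
  have hint : Integrable (fun ω => rexp (s * X ω)) P := by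
    refine ⟨(hg.comp hX).aestronglyMeasurable, ?_⟩
    rw [hasFiniteIntegral_iff_ofReal (ae_of_all _ fun ω => (exp_pos _).le), hL]
    exact ENNReal.ofReal_lt_top
  refine ⟨hint, ?_⟩
  rw [mgf, integral_eq_lintegral_of_nonneg_ae (ae_of_all _ fun ω => (exp_pos _).le)
    (hg.comp hX).aestronglyMeasurable, hL, ENNReal.toReal_ofReal (le_of_lt (div_pos hlam (by linarith)))]

lemma my_iIndepFun_comp {Ω ι κ : Type*} [MeasurableSpace Ω] {μ : Measure Ω}
    {f : ι → Ω → ℝ} (h : iIndepFun f μ)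
    {g : κ → ι} (hg : Function.Injective g) :
    iIndepFun (fun j => f (g j)) μ := by
  classical
  rw [iIndepFun_iff_measure_inter_preimage_eq_mul] at h ⊢
  intro S sets H
  have H' : ∀ i ∈ S.image g, MeasurableSet (Function.extend g sets (fun _ => Set.univ) i) := by
    intro i hi
    obtain ⟨j, hj, rfl⟩ := Finset.mem_image.mp hi
    rw [hg.extend_apply]
    exact H j hj
  have key := h (S.image g) H'
  have h1 : (⋂ i ∈ S.image g, f i ⁻¹' Function.extend g sets (fun _ => Set.univ) i)
      = ⋂ j ∈ S, f (g j) ⁻¹' sets j := by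
    ext ω
    simp only [Set.mem_iInter, Finset.mem_image]
    constructor
    · intro hω j hj
      have := hω (g j) ⟨j, hj, rfl⟩
      rwa [hg.extend_apply] at this
    · rintro hω i ⟨j, hj, rfl⟩
      rw [hg.extend_apply]
      exact hω j hj
  have h2 : (∏ i ∈ S.image g, μ (f i ⁻¹' Function.extend g sets (fun _ => Set.univ) i))
      = ∏ j ∈ S, μ (f (g j) ⁻¹' sets j) := by
    rw [Finset.prod_image (fun a _ b _ hab => hg hab)]
    exact Finset.prod_congr rfl fun j _ => by rw [hg.extend_apply]
  rw [h1, h2] at key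
  exact key

end MucbAux

/-- **Upper bound on the probability of type-2 anomalies for MUCB (Lemma 3).**
Run MUCB(α) on `K ≥ 2` arms with i.i.d. exponential rewards (unique optimal arm `k*`,
`μ* = 1/λ_{k*}`).  Then for every `t ≥ 2`, the type-2 anomaly
`{φ₂}_t = {T_{k*,t} ≥ 1 and B_{k*,t} < μ*}` satisfies `P({φ₂}_t) ≤ t^{−α/2+1}`. -/
theorem mucb_type_two_anomaly_bound {Ω : Type*} [MeasurableSpace Ω] (P : Measure Ω)
    [IsProbabilityMeasure P] (K : ℕ) (hK : 2 ≤ K)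
    (lam : Fin K → ℝ) (hlam : ∀ k, 0 < lam k)
    (X : Fin K → ℕ → Ω → ℝ) (hXmeas : ∀ k n, Measurable (X k n))
    (hindep : iIndepFun (fun p : Fin K × ℕ => X p.1 p.2) P)
    (hdist : ∀ k n, Measure.map (X k n) P = expMeasure (lam k))
    (I : ℕ → Ω → Fin K) (hImeas : ∀ t, Measurable (I t))
    (hdet : IsDeterministicPolicy X I)
    (kstar : Fin K) (hkstar : ∀ k, k ≠ kstar → (lam k)⁻¹ < (lam kstar)⁻¹)
    (α : ℝ) (hα : 0 ≤ α) (hmucb : IsMUCBPolicy α X I)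
    (t : ℕ) (ht : 2 ≤ t) :
    P {ω | 1 ≤ pullCount I kstar t ω ∧
        mucbIndex α X I kstar t ω < (((lam kstar)⁻¹ : ℝ) : EReal)} ≤
      ENNReal.ofReal ((t : ℝ) ^ (-(α / 2) + 1)) := by
  have htR : (1:ℝ) < t := by exact_mod_cast lt_of_lt_of_le one_lt_two (by exact_mod_cast ht)
  have htpos : (0:ℝ) < t := by linarith
  have hL : 0 < Real.log t := Real.log_pos htR
  have hlamₛ : 0 < lam kstar := hlam kstar
  set μs : ℝ := (lam kstar)⁻¹ with hμs
  have hind2 : iIndepFun (fun n => X kstar n) P :=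
    my_iIndepFun_comp hindep (g := fun n => (kstar, n))
      (fun a b h => by simpa using congrArg Prod.snd h)
  set A : ℕ → Set Ω := fun u => {ω | α * Real.log t < u ∧
      ∑ n ∈ Finset.range u, X kstar n ω
        ≤ u * μs * (1 - Real.sqrt (α * Real.log t / u))} with hA
  -- Step 1 : inclusion
  have hsub : {ω | 1 ≤ pullCount I kstar t ω ∧
      mucbIndex α X I kstar t ω < ((μs : ℝ) : EReal)} ⊆ ⋃ u ∈ Finset.Icc 1 t, A u := by
    intro ω ⟨h1, h2⟩
    set u := pullCount I kstar t ω with hu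
    have hut : u ≤ t := (Finset.card_filter_le _ _).trans_eq (Finset.card_range t)
    have hu1 : 1 ≤ u := h1
    rw [mucbIndex] at h2
    split_ifs at h2 with hif
    · exact absurd h2 not_top_lt
    push_neg at hif
    obtain ⟨hu0, huL⟩ := hif
    have hupos : (0:ℝ) < u := by positivity
    have hε1 : Real.sqrt (α * Real.log t / u) < 1 := by
      rw [show (1:ℝ) = Real.sqrt 1 by rw [Real.sqrt_one]]
      exact Real.sqrt_lt_sqrt (by positivity) ((div_lt_one hupos).mpr huL)
    have h2' : sampleMean X I kstar t ω *
        (1 - Real.sqrt (α * Real.log t / u))⁻¹ < μs := by exact_mod_cast h2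
    have hsum : ∑ n ∈ Finset.range u, X kstar n ω
        ≤ u * μs * (1 - Real.sqrt (α * Real.log t / u)) := by
      have h3 : sampleMean X I kstar t ω < μs * (1 - Real.sqrt (α * Real.log t / u)) := by
        rw [← div_eq_mul_inv] at h2'
        exact (div_lt_iff₀ (by linarith)).mp h2'
      rw [sampleMean, ← hu] at h3
      have h5 := (div_lt_iff₀ hupos).mp h3
      calc ∑ n ∈ Finset.range u, X kstar n ω
          ≤ μs * (1 - Real.sqrt (α * Real.log t / u)) * u := h5.le
        _ = u * μs * (1 - Real.sqrt (α * Real.log t / u)) := by ring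
    refine Set.mem_biUnion (Finset.mem_Icc.mpr ⟨hu1, hut⟩) ?_
    exact ⟨huL, hsum⟩
  -- Step 2 : per-u bound
  have hbound : ∀ u ∈ Finset.Icc 1 t, P (A u) ≤ ENNReal.ofReal ((t:ℝ) ^ (-(α/2))) := by
    intro u hu
    obtain ⟨hu1, hut⟩ := Finset.mem_Icc.mp hu
    by_cases hc : α * Real.log t < u
    · have hupos : (0:ℝ) < u := by exact_mod_cast hu1
      have hαL : 0 ≤ α * Real.log t := by positivity
      set ε : ℝ := Real.sqrt (α * Real.log t / u) with hε
      have hε0 : 0 ≤ ε := Real.sqrt_nonneg _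
      have hεsq : ε^2 = α * Real.log t / u := Real.sq_sqrt (by positivity)
      have hε1 : ε < 1 := by
        rw [hε, show (1:ℝ) = Real.sqrt 1 by rw [Real.sqrt_one]]
        exact Real.sqrt_lt_sqrt (by positivity) ((div_lt_one hupos).mpr hc)
      have h1ε : (0:ℝ) < 1 - ε := by linarith
      set s : ℝ := -(lam kstar * ε / (1 - ε)) with hs
      have hs0 : s ≤ 0 := by
        rw [hs, neg_nonpos]
        positivity
      have hslt : s < lam kstar := lt_of_le_of_lt hs0 hlamₛ
      have hint : ∀ n, Integrable (fun ω => Real.exp (s * X kstar n ω)) P :=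
        fun n => (my_exp_int_mgf hlamₛ hslt (hXmeas kstar n) (hdist kstar n)).1
      have hmgf : ∀ n, mgf (X kstar n) P s = 1 - ε := by
        intro n
        rw [(my_exp_int_mgf hlamₛ hslt (hXmeas kstar n) (hdist kstar n)).2, hs]
        field_simp
        ring
      have hintsum : Integrable (fun ω => Real.exp (s * (∑ n ∈ Finset.range u, X kstar n) ω)) P :=
        hind2.integrable_exp_mul_sum (fun n => hXmeas kstar n) (fun n _ => hint n)
      set a : ℝ := u * μs * (1 - ε) with ha
      have chern := measure_le_le_exp_mul_mgf (μ := P)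
        (X := ∑ n ∈ Finset.range u, X kstar n) a hs0 hintsum
      rw [hind2.mgf_sum (fun n => hXmeas kstar n) (Finset.range u)] at chern
      have hprod : ∏ n ∈ Finset.range u, mgf (X kstar n) P s = (1 - ε)^u := by
        rw [Finset.prod_congr rfl fun n _ => hmgf n, Finset.prod_const, Finset.card_range]
      rw [hprod] at chern
      have hval : Real.exp (-s * a) * (1 - ε)^u ≤ (t:ℝ) ^ (-(α/2)) := by
        have e1 : -s * a = u * ε := by
          rw [hs, ha, hμs, neg_neg]
          field_simp
        have e2 : (1 - ε)^u = Real.exp (u * Real.log (1 - ε)) := by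
          rw [← Real.exp_log h1ε, ← Real.exp_nat_mul, Real.exp_log h1ε]
        rw [e1, e2, ← Real.exp_add]
        rw [Real.rpow_def_of_pos htpos]
        apply Real.exp_le_exp.mpr
        have hlog := my_log_one_sub_le hε0 hε1
        have huε : (u:ℝ) * ε^2 = α * Real.log t := by
          rw [hεsq]
          field_simp
        calc (u:ℝ) * ε + u * Real.log (1 - ε) ≤ u * ε + u * (-ε - ε^2/2) := by
              nlinarith [hlog, hupos]
          _ = -(u * ε^2)/2 := by ring
          _ = Real.log t * (-(α/2)) := by rw [huε]; ring
      have hAsub : A u ⊆ {ω | (∑ n ∈ Finset.range u, X kstar n) ω ≤ a} := by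
        intro ω hω
        have h := hω.2
        show (∑ n ∈ Finset.range u, X kstar n) ω ≤ a
        rw [Finset.sum_apply]
        exact h
      calc P (A u) ≤ P {ω | (∑ n ∈ Finset.range u, X kstar n) ω ≤ a} := measure_mono hAsub
        _ = ENNReal.ofReal ((P {ω | (∑ n ∈ Finset.range u, X kstar n) ω ≤ a}).toReal) :=
            (ENNReal.ofReal_toReal (measure_ne_top P _)).symm
        _ ≤ ENNReal.ofReal ((t:ℝ) ^ (-(α/2))) :=
            ENNReal.ofReal_le_ofReal (chern.trans hval)
    · have : A u = ∅ := by
        ext ω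
        simp only [hA, Set.mem_setOf_eq, Set.mem_empty_iff_false, iff_false]
        intro h
        exact hc h.1
      simp [this]
  -- Step 3 : assemble
  calc P {ω | 1 ≤ pullCount I kstar t ω ∧
        mucbIndex α X I kstar t ω < ((μs : ℝ) : EReal)}
      ≤ P (⋃ u ∈ Finset.Icc 1 t, A u) := measure_mono hsub
    _ ≤ ∑ u ∈ Finset.Icc 1 t, P (A u) := measure_biUnion_finset_le _ _
    _ ≤ ∑ u ∈ Finset.Icc 1 t, ENNReal.ofReal ((t:ℝ) ^ (-(α/2))) := Finset.sum_le_sum hbound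
    _ = (Finset.Icc 1 t).card • ENNReal.ofReal ((t:ℝ) ^ (-(α/2))) := Finset.sum_const _
    _ = ENNReal.ofReal ((t : ℝ) ^ (-(α / 2) + 1)) := by
        rw [Nat.card_Icc, Nat.add_sub_cancel, nsmul_eq_mul,
          ← ENNReal.ofReal_natCast t, ← ENNReal.ofReal_mul (Nat.cast_nonneg t)]
        congr 1
        rw [Real.rpow_add htpos, Real.rpow_one]
        ring
end

section
/- (Rate-function bound for the optimal arm.) Let α > 0, t > 1 and let u be a real number with u > α ln(t). Set s = √( α ln(t)/u ) ∈ (0, 1) and b = 1 − s. Then b − 1 − ln(b) ≥ 3 s² / ( 2(1 + 2b) ) ≥ α ln(t) / (2u). -/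
lemma key_rate (x : ℝ) (hx0 : 0 < x) (hx1 : x < 1) :
    3 * (1 - x) ^ 2 / (2 * (1 + 2 * x)) ≤ x - 1 - Real.log x := by
  set g : ℝ → ℝ := fun y => y - 1 - Real.log y - 3 * (1 - y) ^ 2 / (2 * (1 + 2 * y)) with hg
  set g' : ℝ → ℝ := fun c => (c - 1) ^ 3 / (c * (1 + 2 * c) ^ 2) with hg'
  have hcont : ContinuousOn g (Set.Icc x 1) := by
    apply ContinuousOn.sub
    · apply ContinuousOn.sub
      · exact (continuous_id.sub continuous_const).continuousOn
      · exact Real.continuousOn_log.mono (fun y hy => by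
          simp only [Set.mem_compl_iff, Set.mem_singleton_iff]
          have := hy.1; intro h; rw [h] at this; linarith)
    · apply ContinuousOn.div
      · fun_prop
      · fun_prop
      · intro y hy; have := hy.1; nlinarith
  have hderiv : ∀ c ∈ Set.Ioo x 1, HasDerivAt g (g' c) c := by
    intro c hc
    have hc0 : 0 < c := lt_trans hx0 hc.1
    have hden : 2 * (1 + 2 * c) ≠ 0 := by nlinarith
    have h1 : HasDerivAt (fun y : ℝ => y - 1 - Real.log y) (1 - c⁻¹) c :=
      ((hasDerivAt_id c).sub_const 1).sub (Real.hasDerivAt_log (ne_of_gt hc0))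
    have h2 : HasDerivAt (fun y : ℝ => 3 * (1 - y) ^ 2)
        (3 * (2 * (1 - c) * (-1))) c := by
      have : HasDerivAt (fun y : ℝ => (1 - y) ^ 2) (2 * (1 - c) ^ 1 * (-1)) c :=
        ((hasDerivAt_id c).const_sub 1).pow 2
      simpa [mul_assoc] using this.const_mul 3
    have h3 : HasDerivAt (fun y : ℝ => 2 * (1 + 2 * y)) (2 * 2) c := by
      have : HasDerivAt (fun y : ℝ => 1 + 2 * y) 2 c := by
        simpa using ((hasDerivAt_id c).const_mul 2).const_add 1
      simpa using this.const_mul 2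
    have h4 := h2.div h3 hden
    have h5 := h1.sub h4
    convert h5 using 1
    · rfl
    · rfl
    · rfl
    rw [div_eq_iff (by positivity)]
    field_simp
    ring
  obtain ⟨c, hc, hEq⟩ := exists_hasDerivAt_eq_slope g g' hx1 hcont hderiv
  have hg1 : g 1 = 0 := by simp [hg, Real.log_one]
  have hc0 : 0 < c := lt_trans hx0 hc.1
  have hgc : g' c ≤ 0 := by
    apply div_nonpos_of_nonpos_of_nonneg
    · nlinarith [sq_nonneg (c - 1), hc.2]
    · positivity
  rw [hg1] at hEq
  have hx1' : 0 < 1 - x := by linarith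
  have : (0 - g x) / (1 - x) ≤ 0 := hEq ▸ hgc
  have hgx : 0 ≤ g x := by
    rw [div_nonpos_iff] at this
    rcases this with ⟨h, _⟩ | ⟨_, h⟩
    · linarith
    · linarith
  simp only [hg] at hgx
  linarith

/-- **Rate-function bound for the optimal arm.**
For `α > 0`, `t > 1` and `u > α ln t`, setting `s = √(α ln t / u) ∈ (0,1)` and `b = 1 − s`,
we have `b − 1 − ln b ≥ 3 s² / (2 (1 + 2 b)) ≥ α ln t / (2u)`. -/
theorem rate_bound_optimal (α t u : ℝ) (hα : 0 < α) (ht : 1 < t)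
    (hu : α * Real.log t < u) :
    Real.sqrt (α * Real.log t / u) ∈ Set.Ioo (0 : ℝ) 1 ∧
    3 * Real.sqrt (α * Real.log t / u) ^ 2 /
        (2 * (1 + 2 * (1 - Real.sqrt (α * Real.log t / u)))) ≤
      (1 - Real.sqrt (α * Real.log t / u)) - 1 -
        Real.log (1 - Real.sqrt (α * Real.log t / u)) ∧
    α * Real.log t / (2 * u) ≤
      3 * Real.sqrt (α * Real.log t / u) ^ 2 /
        (2 * (1 + 2 * (1 - Real.sqrt (α * Real.log t / u)))) := by
  have hL : 0 < α * Real.log t := mul_pos hα (Real.log_pos ht)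
  have hu0 : 0 < u := lt_trans hL hu
  have hdiv0 : 0 < α * Real.log t / u := div_pos hL hu0
  have hdiv1 : α * Real.log t / u < 1 := (div_lt_one hu0).mpr hu
  set s := Real.sqrt (α * Real.log t / u) with hs
  have hs0 : 0 < s := Real.sqrt_pos.mpr hdiv0
  have hs1 : s < 1 := by
    rw [hs, show (1:ℝ) = Real.sqrt 1 by simp]
    exact Real.sqrt_lt_sqrt (le_of_lt hdiv0) hdiv1
  have hsq : s ^ 2 = α * Real.log t / u := Real.sq_sqrt (le_of_lt hdiv0)
  refine ⟨⟨hs0, hs1⟩, ?_, ?_⟩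
  · have := key_rate (1 - s) (by linarith) (by linarith)
    have h1s : 1 - (1 - s) = s := by ring
    rw [h1s] at this
    convert this using 3 <;> ring
  · rw [hsq]
    have hden : 0 < 2 * (1 + 2 * (1 - s)) := by nlinarith
    have h6 : 2 * (1 + 2 * (1 - s)) ≤ 6 := by nlinarith
    have h1 : 3 * s ^ 2 / 6 ≤ 3 * s ^ 2 / (2 * (1 + 2 * (1 - s))) :=
      div_le_div_of_nonneg_left (by positivity) hden h6
    rw [hsq] at h1
    calc α * Real.log t / (2 * u) = 3 * (α * Real.log t / u) / 6 := by
          field_simp; ring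
      _ ≤ _ := by rw [← hsq] at h1 ⊢; exact h1
end

section
/- (Fixed-sample-size deviation bound for the optimal arm.) Let λ > 0 with mean μ = 1/λ, let α > 0, t > 1, and let u ≥ 1 be an integer with u > α ln(t). If X_1, …, X_u are i.i.d. random variables distributed as the exponential distribution with rate λ, then P( (1/u) Σ_{i=1}^u X_i ≤ μ ( 1 − √( α ln(t)/u ) ) ) ≤ t^{−α/2}. -/
open MeasureTheory ProbabilityTheory Real Set
open scoped NNReal ENNReal

lemma one_sub_le_exp_aux {x : ℝ} (hx : 0 ≤ x) :
    1 - x ≤ Real.exp (-x - x ^ 2 / 2) := by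
  have key : ∀ y : ℝ, HasDerivAt (fun z => Real.exp (-z - z ^ 2 / 2) + z)
      ((-1 - y) * Real.exp (-y - y ^ 2 / 2) + 1) y := by
    intro y
    have h1 : HasDerivAt (fun z : ℝ => -z - z ^ 2 / 2) (-1 - y) y := by
      have h2 := (hasDerivAt_pow 2 y).div_const 2
      have := (hasDerivAt_id y).neg.sub h2
      refine this.congr_deriv ?_
      simp
    have h2 := (Real.hasDerivAt_exp (-y - y ^ 2 / 2)).comp y h1
    have h3 := h2.add (hasDerivAt_id y)
    refine h3.congr_deriv ?_
    ring
  have mono : MonotoneOn (fun z => Real.exp (-z - z ^ 2 / 2) + z) (Set.Ici 0) := by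
    apply monotoneOn_of_deriv_nonneg (convex_Ici 0)
    · exact Continuous.continuousOn (by continuity)
    · intro y _
      exact (key y).differentiableAt.differentiableWithinAt
    · intro y hy
      rw [(key y).deriv]
      rw [interior_Ici] at hy
      have hy0 : 0 ≤ y := (Set.mem_Ioi.1 hy).le
      have e0 : (y + y ^ 2 / 2) + (-y - y ^ 2 / 2) = 0 := by ring
      have e1 : Real.exp (y + y ^ 2 / 2) * Real.exp (-y - y ^ 2 / 2) = 1 := by
        rw [← Real.exp_add, e0, Real.exp_zero]
      have e2 : 1 + y ≤ Real.exp (y + y ^ 2 / 2) := by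
        have e2a : 1 + y ≤ Real.exp y := by linarith [Real.add_one_le_exp y]
        have e2b : Real.exp y ≤ Real.exp (y + y ^ 2 / 2) := Real.exp_le_exp.2 (by nlinarith)
        exact e2a.trans e2b
      nlinarith [mul_le_mul_of_nonneg_right e2 (Real.exp_pos (-y - y ^ 2 / 2)).le,
        (Real.exp_pos (-y - y ^ 2 / 2)).le]
  have h0 : (0 : ℝ) ∈ Set.Ici (0 : ℝ) := Set.mem_Ici.2 le_rfl
  have hxm : x ∈ Set.Ici (0 : ℝ) := hx
  have := mono h0 hxm hx
  simp only [neg_zero, ne_eq, OfNat.ofNat_ne_zero, not_false_eq_true, zero_pow, zero_div,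
    sub_zero, Real.exp_zero, add_zero] at this
  linarith

lemma integral_exp_expMeasure {lam θ : ℝ} (hlam : 0 < lam) (hθ : θ < lam) :
    Integrable (fun x => Real.exp (θ * x)) (expMeasure lam) ∧
      ∫ x, Real.exp (θ * x) ∂(expMeasure lam) = lam / (lam - θ) := by
  have hb : 0 < lam - θ := sub_pos.2 hθ
  have hmeas : Measurable (fun x : ℝ => (exponentialPDFReal lam x).toNNReal) :=
    (measurable_exponentialPDFReal lam).real_toNNReal
  have hEq : expMeasure lam =
      volume.withDensity (fun x => ((exponentialPDFReal lam x).toNNReal : ℝ≥0∞)) := rfl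
  have hfun : (fun x : ℝ => ((exponentialPDFReal lam x).toNNReal : ℝ≥0) •
        Real.exp (θ * x)) =
      Set.indicator (Set.Ici (0 : ℝ)) (fun x => lam * Real.exp (-((lam - θ) * x))) := by
    funext x
    rw [NNReal.smul_def, Real.coe_toNNReal _ (exponentialPDFReal_nonneg hlam x)]
    rw [exponentialPDFReal, gammaPDFReal]
    by_cases hx : 0 ≤ x
    · rw [if_pos hx, Set.indicator_of_mem (Set.mem_Ici.2 hx)]
      rw [smul_eq_mul, mul_assoc, ← Real.exp_add, Real.rpow_one, Real.Gamma_one, div_one,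
        sub_self, Real.rpow_zero, mul_one]
      ring_nf
    · rw [if_neg hx, Set.indicator_of_notMem (by simpa using hx), zero_smul]
  have hIntOn : IntegrableOn (fun x => lam * Real.exp (-((lam - θ) * x))) (Set.Ici 0) := by
    rw [integrableOn_Ici_iff_integrableOn_Ioi]
    simp only [← neg_mul]
    exact (exp_neg_integrableOn_Ioi 0 hb).const_mul lam
  have hind : Integrable
      (fun x : ℝ => ((exponentialPDFReal lam x).toNNReal : ℝ≥0) • Real.exp (θ * x)) volume := by
    rw [hfun, integrable_indicator_iff measurableSet_Ici]
    exact hIntOn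
  constructor
  · rw [hEq, integrable_withDensity_iff_integrable_smul hmeas]
    exact hind
  · rw [hEq, integral_withDensity_eq_integral_smul hmeas]
    rw [show (fun x : ℝ => ((exponentialPDFReal lam x).toNNReal : ℝ≥0) • Real.exp (θ * x)) =
      Set.indicator (Set.Ici (0 : ℝ)) (fun x => lam * Real.exp (-((lam - θ) * x))) from hfun]
    rw [integral_indicator measurableSet_Ici, integral_Ici_eq_integral_Ioi, integral_const_mul]
    have := integral_comp_mul_left_Ioi (fun y => Real.exp (-y)) 0 hb
    rw [mul_zero] at this
    rw [this, integral_exp_neg_Ioi_zero, smul_eq_mul, mul_one, div_eq_mul_inv]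

/-- **Fixed-sample-size deviation bound for the optimal arm.**
Let `λ > 0` with mean `μ = 1/λ`, `α > 0`, `t > 1`, and let `u ≥ 1` be an integer with
`u > α ln t`.  If `X 0, …, X (u-1)` are i.i.d. exponential with rate `λ`, then
`P((1/u) Σ X i ≤ μ (1 − √(α ln t / u))) ≤ t^{−α/2}`. -/
theorem deviation_bound_optimal_arm {Ω : Type*} [MeasurableSpace Ω] (P : Measure Ω)
    [IsProbabilityMeasure P] (lam α t : ℝ) (hlam : 0 < lam) (hα : 0 < α) (ht : 1 < t)
    (u : ℕ) (hu1 : 1 ≤ u) (hu : α * Real.log t < (u : ℝ))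
    (X : Fin u → Ω → ℝ) (hXmeas : ∀ i, Measurable (X i))
    (hindep : iIndepFun X P)
    (hdist : ∀ i, Measure.map (X i) P = expMeasure lam) :
    P {ω | (∑ i, X i ω) / u ≤ (1 / lam) * (1 - Real.sqrt (α * Real.log t / u))} ≤
      ENNReal.ofReal (t ^ (-(α / 2))) := by
  have hu0 : (0 : ℝ) < u := by exact_mod_cast hu1
  have hL : 0 < Real.log t := Real.log_pos ht
  set q : ℝ := α * Real.log t / u with hq_def
  have hq0 : 0 < q := div_pos (mul_pos hα hL) hu0
  have hq1 : q < 1 := (div_lt_one hu0).2 hu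
  set δ : ℝ := Real.sqrt q with hδ_def
  have hδ0 : 0 < δ := Real.sqrt_pos.2 hq0
  have hδsq : δ ^ 2 = q := Real.sq_sqrt hq0.le
  have hδ1 : δ < 1 := by
    rw [show (1 : ℝ) = Real.sqrt 1 by simp]
    exact Real.sqrt_lt_sqrt hq0.le hq1
  have h1δ : 0 < 1 - δ := by linarith
  set θ : ℝ := -(lam * δ / (1 - δ)) with hθ_def
  have hθneg : θ ≤ 0 := by
    rw [hθ_def, neg_nonpos]
    positivity
  have hθlt : θ < lam := lt_of_le_of_lt hθneg hlam
  have hlamθ : lam - θ = lam / (1 - δ) := by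
    rw [hθ_def]
    field_simp
    ring
  obtain ⟨hint_exp, hval_exp⟩ := integral_exp_expMeasure hlam hθlt
  -- integrability of each exp(θ X i)
  have hint : ∀ i, Integrable (fun ω => Real.exp (θ * X i ω)) P := by
    intro i
    have hsm' : AEStronglyMeasurable (fun x : ℝ => Real.exp (θ * x)) (Measure.map (X i) P) :=
      (Real.continuous_exp.comp (continuous_const.mul continuous_id)).aestronglyMeasurable
    rw [show (fun ω => Real.exp (θ * X i ω)) = (fun x => Real.exp (θ * x)) ∘ X i from rfl,
      ← integrable_map_measure hsm' (hXmeas i).aemeasurable, hdist i]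
    exact hint_exp
  -- mgf of each X i
  have hmgf : ∀ i, mgf (X i) P θ = 1 - δ := by
    intro i
    have hsm' : AEStronglyMeasurable (fun x : ℝ => Real.exp (θ * x)) (Measure.map (X i) P) :=
      (Real.continuous_exp.comp (continuous_const.mul continuous_id)).aestronglyMeasurable
    have : mgf (X i) P θ = ∫ x, Real.exp (θ * x) ∂(Measure.map (X i) P) := by
      rw [integral_map (hXmeas i).aemeasurable hsm']
      rfl
    rw [this, hdist i, hval_exp, hlamθ]
    field_simp
  -- Chernoff
  set S : Ω → ℝ := ∑ i, X i with hS_def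
  have hintS : Integrable (fun ω => Real.exp (θ * S ω)) P :=
    hindep.integrable_exp_mul_sum hXmeas (fun i _ => hint i)
  set ε : ℝ := (1 / lam) * (1 - δ) * u with hε_def
  have hset : {ω | (∑ i, X i ω) / u ≤ (1 / lam) * (1 - Real.sqrt (α * Real.log t / u))} =
      {ω | S ω ≤ ε} := by
    ext ω
    simp only [Set.mem_setOf_eq, hS_def, Finset.sum_apply, hε_def]
    rw [div_le_iff₀ hu0]
  have hchern := measure_le_le_exp_mul_mgf (X := S) (μ := P) ε hθneg hintS
  have hmgfS : mgf S P θ = (1 - δ) ^ u := by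
    rw [hS_def, hindep.mgf_sum hXmeas]
    simp [hmgf]
  -- numeric bound
  have hεval : -θ * ε = δ * u := by
    rw [hθ_def, hε_def]
    field_simp
  have hkey : (1 - δ) ^ u ≤ Real.exp (-δ - δ ^ 2 / 2) ^ u :=
    pow_le_pow_left₀ h1δ.le (one_sub_le_exp_aux hδ0.le) u
  have hbound : Real.exp (-θ * ε) * mgf S P θ ≤ t ^ (-(α / 2)) := by
    rw [hεval, hmgfS]
    have h2 : Real.exp (δ * u) * Real.exp (-δ - δ ^ 2 / 2) ^ u =
        Real.exp (δ * u + u * (-δ - δ ^ 2 / 2)) := by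
      rw [← Real.exp_nat_mul, ← Real.exp_add]
    have h3 : δ * u + u * (-δ - δ ^ 2 / 2) = -(u * δ ^ 2) / 2 := by ring
    have h4 : u * δ ^ 2 = α * Real.log t := by
      rw [hδsq, hq_def]
      field_simp
    have h5 : t ^ (-(α / 2)) = Real.exp (-(u * δ ^ 2) / 2) := by
      rw [Real.rpow_def_of_pos (lt_trans one_pos ht), h4]
      ring_nf
    calc Real.exp (δ * u) * (1 - δ) ^ u
        ≤ Real.exp (δ * u) * Real.exp (-δ - δ ^ 2 / 2) ^ u := by
          exact mul_le_mul_of_nonneg_left hkey (Real.exp_pos _).le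
      _ = Real.exp (-(u * δ ^ 2) / 2) := by rw [h2, h3]
      _ = t ^ (-(α / 2)) := h5.symm
  rw [hset]
  rw [ENNReal.le_ofReal_iff_toReal_le (measure_ne_top P _)
    (Real.rpow_nonneg (le_of_lt (lt_trans one_pos ht)) _)]
  exact le_trans hchern hbound
end
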